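/- arXiv:2304.00068 — 2 statements merged into one kernel-verified Lean document; each statement's English description precedes it below -/
import Mathlib

section
/- If a discrete net A over a metric space L satisfies weak algebraic Haag duality with duality constants R and D, and α : A → B is a *-isomorphism of quasi-local algebras with spread at most T, then B satisfies weak algebraic Haag duality with constants R and D + 2T. -/
/-- A discrete net of C*-algebras over a metric space `L`: an assignment of unital
C*-subalgebras of a quasi-local algebra `A` to subsets of `L`, monotone, with commuting
algebras for disjoint regions, generated by the algebras of finite subsets, and with
dense union of local algebras. -/
structure CStarNet (L : Type*) [MetricSpace L] (A : Type*)
    [NormedRing A] [StarRing A] [CStarRing A] [NormedAlgebra ℂ A] [StarModule ℂ A] where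
  alg : Set L → StarSubalgebra ℂ A
  mono : ∀ {F G : Set L}, F ⊆ G → alg F ≤ alg G
  commutes : ∀ {F G : Set L}, Disjoint F G → ∀ x ∈ alg F, ∀ y ∈ alg G, x * y = y * x
  generated : ∀ M : Set L, alg M = ⨆ (F : Finset L) (_ : ↑F ⊆ M), alg ↑F
  dense_union : Dense (⋃ F : Finset L, (alg ↑F : Set A))

/-- The `T`-neighborhood of a set in a metric space. -/
def rNbhd {L : Type*} [MetricSpace L] (T : ℝ) (F : Set L) : Set L :=
  {x : L | ∃ y ∈ F, dist x y ≤ T}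

/-- Weak algebraic Haag duality with duality constants `R`, `D`: for every ball `F` of
radius `U ≥ R` about a point `x`, the centralizer of `A_{F^c}` in `A` is contained in the
local algebra of the ball of radius `U + D` about `x`. -/
def WeakHaagDuality {L : Type*} [MetricSpace L] {A : Type*}
    [NormedRing A] [StarRing A] [CStarRing A] [NormedAlgebra ℂ A] [StarModule ℂ A]
    (N : CStarNet L A) (R D : ℝ) : Prop :=
  ∀ (x : L) (U : ℝ), R ≤ U →
    Set.centralizer ((N.alg (Metric.closedBall x U)ᶜ : StarSubalgebra ℂ A) : Set A) ⊆
      ((N.alg (Metric.closedBall x (U + D)) : StarSubalgebra ℂ A) : Set A)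

/-- A ⋆-isomorphism of quasi-local algebras has spread at most `T` if it and its inverse
map operators localized in a finite region `F` into the `T`-neighborhood of `F`. -/
def HasSpread {L : Type*} [MetricSpace L] {A B : Type*}
    [NormedRing A] [StarRing A] [CStarRing A] [NormedAlgebra ℂ A] [StarModule ℂ A]
    [NormedRing B] [StarRing B] [CStarRing B] [NormedAlgebra ℂ B] [StarModule ℂ B]
    (NA : CStarNet L A) (NB : CStarNet L B) (α : A ≃⋆ₐ[ℂ] B) (T : ℝ) : Prop :=
  ∀ F : Finset L,
    (∀ x ∈ NA.alg ↑F, α x ∈ NB.alg (rNbhd T ↑F)) ∧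
    (∀ y ∈ NB.alg ↑F, α.symm y ∈ NA.alg (rNbhd T ↑F))

/-- Weak algebraic Haag duality is preserved under bounded spread isomorphism: if `A`
satisfies weak algebraic Haag duality with constants `R`, `D` and `α : A → B` is a
⋆-isomorphism of quasi-local algebras with spread at most `T`, then `B` satisfies weak
algebraic Haag duality with constants `R` and `D + 2T`. -/
theorem weakHaagDuality_of_hasSpread
    {L : Type*} [MetricSpace L] {A B : Type*}
    [NormedRing A] [StarRing A] [CStarRing A] [NormedAlgebra ℂ A] [StarModule ℂ A]
    [NormedRing B] [StarRing B] [CStarRing B] [NormedAlgebra ℂ B] [StarModule ℂ B]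
    (NA : CStarNet L A) (NB : CStarNet L B) (R D T : ℝ)
    (hR : 0 ≤ R) (hD : 0 ≤ D) (hT : 0 ≤ T)
    (hHaag : WeakHaagDuality NA R D)
    (α : A ≃⋆ₐ[ℂ] B) (hα : HasSpread NA NB α T) :
    WeakHaagDuality NB R (D + 2 * T) := by
  intro x U hU b hb
  set a := α.symm b with ha
  -- Step 1: `a` lies in the centralizer of `NA.alg (closedBall x (U+T))ᶜ`.
  have hstep1 : a ∈ Set.centralizer
      ((NA.alg (Metric.closedBall x (U + T))ᶜ : StarSubalgebra ℂ A) : Set A) := by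
    have hle : NA.alg (Metric.closedBall x (U + T))ᶜ ≤ StarSubalgebra.centralizer ℂ {a} := by
      rw [NA.generated (Metric.closedBall x (U + T))ᶜ]
      apply iSup_le; intro F; apply iSup_le; intro hF
      intro y hy
      rw [StarSubalgebra.mem_centralizer_iff]
      rintro g rfl
      -- `α y ∈ NB.alg (rNbhd T F)` and `rNbhd T F ⊆ (closedBall x U)ᶜ`
      have hsub : rNbhd T (↑F : Set L) ⊆ (Metric.closedBall x U)ᶜ := by
        rintro z ⟨w, hwF, hzw⟩
        have hw : w ∉ Metric.closedBall x (U + T) := hF hwF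
        simp only [Metric.mem_closedBall, not_le] at hw
        simp only [Set.mem_compl_iff, Metric.mem_closedBall, not_le]
        have h5 := dist_triangle w z x
        rw [dist_comm w z] at h5
        linarith
      have key : ∀ z ∈ NA.alg (↑F : Set L), z * a = a * z := by
        intro z hz
        have h1 : α z ∈ NB.alg (rNbhd T (↑F : Set L)) := (hα F).1 z hz
        have h2 : α z ∈ NB.alg (Metric.closedBall x U)ᶜ := NB.mono hsub h1
        have h3 : α z * b = b * α z := hb (α z) h2
        have := congrArg α.symm h3
        simpa [map_mul] using this
      constructor
      · exact (key y hy).symm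
      · have := key (star y) (star_mem hy)
        have h4 : star (star y * a) = star (a * star y) := congrArg star this
        simpa [star_mul] using h4
    intro m hm
    have := hle hm
    rw [StarSubalgebra.mem_centralizer_iff] at this
    exact ((this a rfl).1).symm
  -- Step 2: Haag duality for A.
  have hRU : R ≤ U + T := by linarith
  have hstep2 : a ∈ NA.alg (Metric.closedBall x (U + T + D)) := hHaag x (U + T) hRU hstep1
  -- Step 3: push back through α using spread.
  have hle2 : NA.alg (Metric.closedBall x (U + T + D)) ≤
      (NB.alg (Metric.closedBall x (U + (D + 2 * T)))).comap (α : A →⋆ₐ[ℂ] B) := by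
    rw [NA.generated (Metric.closedBall x (U + T + D))]
    apply iSup_le; intro F; apply iSup_le; intro hF
    intro z hz
    rw [StarSubalgebra.mem_comap]
    have h1 : α z ∈ NB.alg (rNbhd T (↑F : Set L)) := (hα F).1 z hz
    refine NB.mono ?_ h1
    rintro w ⟨v, hvF, hwv⟩
    have hv : v ∈ Metric.closedBall x (U + T + D) := hF hvF
    simp only [Metric.mem_closedBall] at hv ⊢
    calc dist w x ≤ dist w v + dist v x := dist_triangle w v x
    _ ≤ T + (U + T + D) := by linarith
    _ ≤ U + (D + 2 * T) := by linarith
  have := hle2 hstep2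
  rw [StarSubalgebra.mem_comap] at this
  simpa [ha] using this
end

section
/- Suppose a discrete net A satisfies weak algebraic Haag duality with constants R, D. Let F be a ball of radius U ≥ R about x ∈ L, let {b_i} be a projective basis of an A-A correspondence X satisfying a b_i = b_i a for all a ∈ A_{F^c}, and let G be the ball of radius U + D about x. Then for every a ∈ A_F and all i, j, the inner product ⟨b_i | a b_j⟩ lies in A_G. -/
/-- An `A`-`A` correspondence: a right Hilbert `A`-module with a commuting left action
of `A` by adjointable operators, presented algebraically. -/
structure Corr (A : Type*)
    [NormedRing A] [StarRing A] [CStarRing A] [NormedAlgebra ℂ A] [StarModule ℂ A]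
    (X : Type*) [NormedAddCommGroup X] [NormedSpace ℂ X] where
  lsmul : A → X → X
  rsmul : X → A → X
  inner : X → X → A
  lsmul_add : ∀ a x y, lsmul a (x + y) = lsmul a x + lsmul a y
  add_lsmul : ∀ a b x, lsmul (a + b) x = lsmul a x + lsmul b x
  lsmul_mul : ∀ a b x, lsmul (a * b) x = lsmul a (lsmul b x)
  one_lsmul : ∀ x, lsmul 1 x = x
  rsmul_add : ∀ x y a, rsmul (x + y) a = rsmul x a + rsmul y a
  rsmul_add' : ∀ x a b, rsmul x (a + b) = rsmul x a + rsmul x b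
  rsmul_mul : ∀ x a b, rsmul x (a * b) = rsmul (rsmul x a) b
  rsmul_one : ∀ x, rsmul x 1 = x
  lsmul_rsmul : ∀ a x b, rsmul (lsmul a x) b = lsmul a (rsmul x b)
  inner_add_right : ∀ x y z, inner x (y + z) = inner x y + inner x z
  inner_rsmul_right : ∀ x y a, inner x (rsmul y a) = inner x y * a
  inner_star : ∀ x y, star (inner x y) = inner y x
  inner_lsmul : ∀ a x y, inner (lsmul a x) y = inner x (lsmul (star a) y)
  norm_inner_self : ∀ x, ‖inner x x‖ = ‖x‖ ^ 2
  continuous_inner_right : ∀ x, Continuous (inner x)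
  continuous_rsmul_right : ∀ x, Continuous (rsmul x)
  continuous_lsmul_right : ∀ a, Continuous (lsmul a)

/-- A finite family is a projective basis for a correspondence if the reproducing
formula `∑ i, b i ⬝ ⟪b i, x⟫ = x` holds for every `x`. -/
def Corr.IsProjBasis {A : Type*}
    [NormedRing A] [StarRing A] [CStarRing A] [NormedAlgebra ℂ A] [StarModule ℂ A]
    {X : Type*} [NormedAddCommGroup X] [NormedSpace ℂ X]
    (ρ : Corr A X) {ι : Type*} [Fintype ι] (b : ι → X) : Prop :=
  ∀ x : X, ∑ i, ρ.rsmul (b i) (ρ.inner (b i) x) = x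

/-- A realization of the relative tensor product `X ⊠_A Y` as a correspondence `Z`:
a balanced bilinear map `t : X → Y → Z` with the characteristic inner product formula
`⟪x₁ ⊠ y₁, x₂ ⊠ y₂⟫ = ⟪y₁, ⟪x₁, x₂⟫ ▷ y₂⟫` and total (dense) image. -/
structure RelTensor {A : Type*}
    [NormedRing A] [StarRing A] [CStarRing A] [NormedAlgebra ℂ A] [StarModule ℂ A]
    {X Y Z : Type*} [NormedAddCommGroup X] [NormedSpace ℂ X]
    [NormedAddCommGroup Y] [NormedSpace ℂ Y] [NormedAddCommGroup Z] [NormedSpace ℂ Z]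
    (ρX : Corr A X) (ρY : Corr A Y) (ρZ : Corr A Z) where
  t : X → Y → Z
  add_left : ∀ x x' y, t (x + x') y = t x y + t x' y
  add_right : ∀ x y y', t x (y + y') = t x y + t x y'
  balanced : ∀ x a y, t (ρX.rsmul x a) y = t x (ρY.lsmul a y)
  rsmul_t : ∀ x y a, ρZ.rsmul (t x y) a = t x (ρY.rsmul y a)
  lsmul_t : ∀ a x y, ρZ.lsmul a (t x y) = t (ρX.lsmul a x) y
  inner_t : ∀ x₁ y₁ x₂ y₂,
    ρZ.inner (t x₁ y₁) (t x₂ y₂) = ρY.inner y₁ (ρY.lsmul (ρX.inner x₁ x₂) y₂)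
  dense_span : Dense ((Submodule.span ℂ {z : Z | ∃ x y, z = t x y} : Submodule ℂ Z) : Set Z)

/-- A projective basis of a correspondence over the quasi-local algebra of a net is
localized in a region `F` if each basis vector commutes with every operator localized in
the complement of `F`. -/
def Corr.BasisLocalizedIn {L : Type*} [MetricSpace L] {A : Type*}
    [NormedRing A] [StarRing A] [CStarRing A] [NormedAlgebra ℂ A] [StarModule ℂ A]
    {X : Type*} [NormedAddCommGroup X] [NormedSpace ℂ X]
    (N : CStarNet L A) (ρ : Corr A X) {ι : Type*} (b : ι → X) (F : Set L) : Prop :=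
  ∀ i, ∀ a ∈ N.alg Fᶜ, ρ.lsmul a (b i) = ρ.rsmul (b i) a

/-- Under weak algebraic Haag duality with constants `R`, `D`, if `{b i}` is a projective
basis of a correspondence `X` localized in the ball `F` of radius `U ≥ R` about `x₀`,
then for every `a ∈ A_F` the inner products `⟪b i, a ▷ b j⟫` lie in the local algebra of
the ball of radius `U + D` about `x₀`. -/
theorem inner_localized_of_weakHaagDuality
    {L : Type*} [MetricSpace L] {A : Type*}
    [NormedRing A] [StarRing A] [CStarRing A] [NormedAlgebra ℂ A] [StarModule ℂ A]
    {X : Type*} [NormedAddCommGroup X] [NormedSpace ℂ X]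
    (N : CStarNet L A) (R D : ℝ) (hHaag : WeakHaagDuality N R D)
    (ρ : Corr A X) (x₀ : L) (U : ℝ) (hU : R ≤ U)
    {n : ℕ} (b : Fin n → X) (hbasis : ρ.IsProjBasis b)
    (hloc : Corr.BasisLocalizedIn N ρ b (Metric.closedBall x₀ U)) :
    ∀ a ∈ N.alg (Metric.closedBall x₀ U), ∀ i j,
      ρ.inner (b i) (ρ.lsmul a (b j)) ∈ N.alg (Metric.closedBall x₀ (U + D)) := by
  intro a ha i j
  apply hHaag x₀ U hU
  intro c hc
  have hc' : star c ∈ N.alg (Metric.closedBall x₀ U)ᶜ := star_mem hc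
  have comm : a * c = c * a :=
    N.commutes disjoint_compl_right a ha c hc
  have h1 : ρ.inner (b i) (ρ.lsmul a (b j)) * c = ρ.inner (b i) (ρ.lsmul (a * c) (b j)) := by
    rw [← ρ.inner_rsmul_right, ρ.lsmul_rsmul, ← hloc j c hc, ← ρ.lsmul_mul]
  have h2 : c * ρ.inner (b i) (ρ.lsmul a (b j)) = ρ.inner (b i) (ρ.lsmul (c * a) (b j)) := by
    have e1 : c * ρ.inner (b i) (ρ.lsmul a (b j))
        = star (ρ.inner (ρ.lsmul a (b j)) (b i) * star c) := by
      rw [star_mul, star_star, ρ.inner_star]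
    rw [e1, ← ρ.inner_rsmul_right, ← hloc i (star c) hc', ρ.inner_star, ρ.inner_lsmul,
      star_star, ← ρ.lsmul_mul]
  rw [h1, h2, comm]
end
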